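/- Von Neumann minimax on simplices: for any real m×n matrix M, max over ω ∈ S_m(1) of min over x ∈ S_n(1) of ⟨ω, Mx⟩ equals min over x ∈ S_n(1) of max over ω ∈ S_m(1) of ⟨ω, Mx⟩. -/

import Mathlib

open Matrix

/-- Von Neumann minimax on simplices: for any real `m × n` matrix `M`,
`max_{ω ∈ S_m} min_{x ∈ S_n} ⟨ω, Mx⟩ = min_{x ∈ S_n} max_{ω ∈ S_m} ⟨ω, Mx⟩`,
with both the outer max/min and inner min/max attained. -/
theorem stmt_14 {m n : ℕ} (hm : 0 < m) (hn : 0 < n) (M : Matrix (Fin m) (Fin n) ℝ) :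
    ∃ C : ℝ,
      IsGreatest {v : ℝ | ∃ ω ∈ stdSimplex ℝ (Fin m),
        IsLeast {u : ℝ | ∃ x ∈ stdSimplex ℝ (Fin n),
          u = ∑ i, ω i * M.mulVec x i} v} C ∧
      IsLeast {v : ℝ | ∃ x ∈ stdSimplex ℝ (Fin n),
        IsGreatest {u : ℝ | ∃ ω ∈ stdSimplex ℝ (Fin m),
          u = ∑ i, ω i * M.mulVec x i} v} C := by
  haveI : Nonempty (Fin m) := Fin.pos_iff_nonempty.mp hm
  haveI : Nonempty (Fin n) := Fin.pos_iff_nonempty.mp hn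
  have hune : (Finset.univ : Finset (Fin m)).Nonempty := Finset.univ_nonempty
  -- g x = max_i (Mx)_i
  set g : (Fin n → ℝ) → ℝ := fun x => Finset.univ.sup' hune (fun i => M.mulVec x i) with hg
  -- weighted average ≤ max
  have h1 : ∀ ω ∈ stdSimplex ℝ (Fin m), ∀ y : Fin m → ℝ,
      ∑ i, ω i * y i ≤ Finset.univ.sup' hune y := by
    intro ω hω y
    calc ∑ i, ω i * y i ≤ ∑ i, ω i * Finset.univ.sup' hune y := by
          refine Finset.sum_le_sum fun i _ => ?_
          exact mul_le_mul_of_nonneg_left (Finset.le_sup' y (Finset.mem_univ i)) (hω.1 i)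
      _ = Finset.univ.sup' hune y := by
          rw [← Finset.sum_mul, hω.2, one_mul]
  -- continuity of each coordinate of mulVec and of g
  have hcont : ∀ i, Continuous fun x : Fin n → ℝ => M.mulVec x i := by
    intro i
    simp only [Matrix.mulVec, dotProduct]
    exact continuous_finset_sum _ fun j _ => (continuous_const.mul (continuous_apply j))
  have hgcont : Continuous g :=
    Continuous.finset_sup'_apply hune fun i _ => hcont i
  -- minimizer x* of g on the simplex
  obtain ⟨x₀, hx₀, hx₀min⟩ := (isCompact_stdSimplex ℝ (Fin n)).exists_isMinOn
      ⟨_, single_mem_stdSimplex ℝ (Classical.arbitrary (Fin n))⟩ hgcont.continuousOn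
  set v : ℝ := g x₀ with hv
  have hvle : ∀ x ∈ stdSimplex ℝ (Fin n), v ≤ g x := fun x hx => hx₀min hx
  -- the sets to separate
  set A : Set (Fin m → ℝ) := M.mulVec '' stdSimplex ℝ (Fin n) with hA
  set B : Set (Fin m → ℝ) := {y | ∀ i, y i < v} with hB
  have hAconv : Convex ℝ A := by
    have := (convex_stdSimplex ℝ (Fin n)).linear_image M.mulVecLin
    simpa [hA, Set.image_congr' (fun x => Matrix.mulVecLin_apply M x)] using this
  have hBconv : Convex ℝ B := by
    have : B = Set.pi Set.univ (fun _ : Fin m => Set.Iio v) := by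
      ext y; simp [hB, Set.mem_pi]
    rw [this]
    exact convex_pi fun i _ => convex_Iio v
  have hBopen : IsOpen B := by
    have : B = ⋂ i, (fun y : Fin m → ℝ => y i) ⁻¹' Set.Iio v := by
      ext y; simp [hB]
    rw [this]
    exact isOpen_iInter_of_finite fun i => (isOpen_Iio).preimage (continuous_apply i)
  have hdisj : Disjoint B A := by
    rw [Set.disjoint_left]
    rintro y hy ⟨x, hx, rfl⟩
    have h2 : g x < v := by
      rw [hg]
      exact (Finset.sup'_lt_iff hune).2 fun i _ => hy i
    exact absurd (hvle x hx) (not_le.2 h2)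
  obtain ⟨f, u, hfB, hfA⟩ := geometric_hahn_banach_open hBconv hBopen hAconv hdisj
  -- ω from f
  set ω : Fin m → ℝ := fun i => f (Pi.single i 1) with hω
  have hfrep : ∀ y : Fin m → ℝ, f y = ∑ i, y i * ω i := by
    intro y
    have := LinearMap.pi_apply_eq_sum_univ (f.toLinearMap) y
    simp only [ContinuousLinearMap.coe_coe, smul_eq_mul] at this
    rw [this]
    refine Finset.sum_congr rfl fun i _ => ?_
    congr 1
    rw [hω]
    congr 1
    ext j
    simp [Pi.single_apply, eq_comm]
  -- ω is nonnegative
  have hωnn : ∀ i, 0 ≤ ω i := by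
    intro i
    by_contra hneg
    push_neg at hneg
    set c : ℝ := f (fun _ => v - 1) with hc
    set d : ℝ := -ω i with hd
    have hd0 : 0 < d := by simp [hd]; linarith
    set t : ℝ := max 0 ((u - c) / d + 1) with ht
    have ht0 : 0 ≤ t := le_max_left _ _
    set y : Fin m → ℝ := (fun _ => v - 1) - t • (Pi.single i 1 : Fin m → ℝ) with hydef
    have hy : y ∈ B := by
      intro j
      rw [hydef]
      simp only [Pi.sub_apply, Pi.smul_apply, smul_eq_mul]
      rcases eq_or_ne j i with rfl | hne
      · simp only [Pi.single_eq_same, mul_one]; linarith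
      · simp [Pi.single_eq_of_ne hne]
    have hlt : f y < u := hfB _ hy
    have hval : f y = c + t * d := by
      rw [hydef, f.map_sub, f.map_smul]
      simp only [smul_eq_mul, hc, hd, hω]
      ring
    rw [hval] at hlt
    have htge : (u - c) / d + 1 ≤ t := le_max_right _ _
    have : u - c + d ≤ t * d := by
      calc u - c + d = ((u - c) / d + 1) * d := by field_simp
        _ ≤ t * d := by nlinarith
    linarith
  -- S = ∑ ω i > 0
  set S : ℝ := ∑ i, ω i with hS
  have hSnn : 0 ≤ S := Finset.sum_nonneg fun i _ => hωnn i
  have hconst : ∀ c : ℝ, f (fun _ => c) = c * S := by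
    intro c
    rw [hfrep, hS, Finset.mul_sum]
  have hApt : M.mulVec x₀ ∈ A := ⟨x₀, hx₀, rfl⟩
  have hSpos : 0 < S := by
    rcases lt_or_eq_of_le hSnn with h | h
    · exact h
    · exfalso
      have h0 : ∀ i, ω i = 0 := by
        intro i
        have := Finset.sum_eq_zero_iff_of_nonneg (fun i _ => hωnn i) |>.1 h.symm i (Finset.mem_univ i)
        exact this
      have hfz : ∀ y, f y = 0 := by
        intro y; rw [hfrep]; simp [h0]
      have h1' : u ≤ 0 := by have := hfA _ hApt; rwa [hfz] at this
      have h2' : (0:ℝ) < u := by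
        have hb : (fun _ : Fin m => v - 1) ∈ B := fun j => by simp
        have := hfB _ hb; rwa [hfz] at this
      linarith
  -- v * S ≤ u
  have hvSu : v * S ≤ u := by
    by_contra hcon
    push_neg at hcon
    set ε : ℝ := (v * S - u) / S with hε
    have hεpos : 0 < ε := div_pos (by linarith) hSpos
    have hb : (fun _ : Fin m => v - ε) ∈ B := fun j => by simp [hεpos]
    have h2 := hfB _ hb
    rw [hconst] at h2
    have h3 : (v - ε) * S = u := by
      rw [hε]; field_simp; ring
    linarith
  -- the optimal ω*
  set ω' : Fin m → ℝ := fun i => ω i / S with hω'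
  have hω'mem : ω' ∈ stdSimplex ℝ (Fin m) := by
    constructor
    · intro i; exact div_nonneg (hωnn i) hSnn
    · rw [hω']
      simp only
      rw [← Finset.sum_div, ← hS, div_self (ne_of_gt hSpos)]
  have hkey : ∀ x ∈ stdSimplex ℝ (Fin n), v ≤ ∑ i, ω' i * M.mulVec x i := by
    intro x hx
    have hfx : u ≤ f (M.mulVec x) := hfA _ ⟨x, hx, rfl⟩
    rw [hfrep] at hfx
    have heq : ∑ i, ω' i * M.mulVec x i = (∑ i, M.mulVec x i * ω i) / S := by
      rw [Finset.sum_div]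
      refine Finset.sum_congr rfl fun i _ => ?_
      rw [hω']; ring
    rw [heq]
    rw [le_div_iff₀ hSpos]
    linarith
  -- value at the saddle point
  have hx₀val : ∑ i, ω' i * M.mulVec x₀ i = v := by
    have hle : ∑ i, ω' i * M.mulVec x₀ i ≤ v := h1 ω' hω'mem (M.mulVec x₀)
    have hge := hkey x₀ hx₀
    linarith
  refine ⟨v, ⟨⟨ω', hω'mem, ?_, ?_⟩, ?_⟩, ⟨⟨x₀, hx₀, ?_, ?_⟩, ?_⟩⟩
  · -- v in the inner min set for ω'
    exact ⟨x₀, hx₀, hx₀val.symm⟩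
  · -- v is a lower bound for inner set of ω'
    rintro w ⟨x, hx, rfl⟩
    exact hkey x hx
  · -- v is an upper bound for the outer max set
    rintro w ⟨ωa, hωa, hwmem, hwlb⟩
    have : w ≤ ∑ i, ωa i * M.mulVec x₀ i := hwlb ⟨x₀, hx₀, rfl⟩
    exact le_trans this (h1 ωa hωa (M.mulVec x₀))
  · -- v in the inner max set for x₀: some vertex attains the max
    obtain ⟨i₀, _, hi₀⟩ := Finset.exists_mem_eq_sup' hune (fun i => M.mulVec x₀ i)
    refine ⟨Pi.single i₀ 1, single_mem_stdSimplex ℝ i₀, ?_⟩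
    rw [hv, hg]
    simp only
    rw [hi₀]
    rw [Finset.sum_eq_single i₀]
    · simp
    · intro j _ hj; simp [Pi.single_eq_of_ne hj]
    · intro h; exact absurd (Finset.mem_univ i₀) h
  · -- v is an upper bound for inner set of x₀
    rintro w ⟨ωa, hωa, rfl⟩
    exact h1 ωa hωa (M.mulVec x₀)
  · -- v is lower bound for the outer min set
    rintro w ⟨x, hx, hwmem, hwub⟩
    have : ∑ i, ω' i * M.mulVec x i ≤ w := hwub ⟨ω', hω'mem, rfl⟩
    exact le_trans (hkey x hx) this
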